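/- Let 𝒜 and ℬ be families of subsets of [n] = {1,...,n} that are cross-IU, with |𝒜| ≥ |ℬ|. Then |𝒜| + 3·|ℬ| ≤ 2^n. -/

import Mathlib

open Finset

/-- Integer arithmetic core of the counting argument. -/
lemma stmt_12_arith (a b d u k N : ℤ) (hb0 : 0 ≤ b) (hd0 : 0 ≤ d) (hu0 : 0 ≤ u)
    (hk0 : 0 ≤ k) (hN1 : 1 ≤ N)
    (h2 : a + d + u ≤ N + k) (h3 : N < a + 3 * b) (h4 : b ≤ a) (h5 : b ≤ k)
    (h6 : N * k ≤ d * u) (h8 : d ≤ N) (h9 : u ≤ N) : False := by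
  have hk4 : d + u + 1 ≤ 4 * k := by linarith
  have hgt : N < d + u := by
    by_contra hle
    push_neg at hle
    have t0 : N * (d + u + 1) ≤ N * (4 * k) :=
      mul_le_mul_of_nonneg_left hk4 (by linarith)
    have t1 : 4 * (d * u) ≤ (d + u) * (d + u) := by nlinarith [sq_nonneg (d - u)]
    have t2 : (d + u) * (d + u) ≤ N * (d + u) :=
      mul_le_mul_of_nonneg_right hle (by linarith)
    nlinarith [t0, t1, t2, h6]
  have hlt : d + u < N := by
    by_contra hle
    push_neg at hle
    have h4a : N + 1 ≤ 4 * a := by linarith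
    have hsub : a ≤ N + k - d - u := by linarith
    have t0 : N * a ≤ N * (N + k - d - u) :=
      mul_le_mul_of_nonneg_left hsub (by linarith)
    have t0' : N * (N + 1) ≤ N * (4 * a) :=
      mul_le_mul_of_nonneg_left h4a (by linarith)
    have t1 : N * N + N ≤ 4 * ((N - d) * (N - u)) := by nlinarith [t0, t0', h6]
    have t2 : 4 * ((N - d) * (N - u)) ≤ (2 * N - d - u) * (2 * N - d - u) := by
      nlinarith [sq_nonneg (d - u)]
    have t3 : (2 * N - d - u) * (2 * N - d - u) ≤ N * N := by
      nlinarith [mul_nonneg (by linarith : (0:ℤ) ≤ d + u - N) (by linarith : (0:ℤ) ≤ 3 * N - d - u)]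
    linarith
  linarith

/-- If `𝒜, ℬ` are cross-IU families of subsets of `[n]` with `|𝒜| ≥ |ℬ|`,
then `|𝒜| + 3|ℬ| ≤ 2^n`. -/
theorem stmt_12 (n : ℕ) (𝒜 ℬ : Finset (Finset (Fin n)))
    (hIU : ∀ A ∈ 𝒜, ∀ B ∈ ℬ, A ∩ B ≠ ∅ ∧ A ∪ B ≠ Finset.univ)
    (hcard : ℬ.card ≤ 𝒜.card) :
    𝒜.card + 3 * ℬ.card ≤ 2 ^ n := by
  classical
  by_contra hcon
  push_neg at hcon
  set D : Finset (Finset (Fin n)) :=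
    Finset.univ.filter (fun S => ∃ B ∈ ℬ, S ⊆ Bᶜ) with hD
  set U : Finset (Finset (Fin n)) :=
    Finset.univ.filter (fun S => ∃ B ∈ ℬ, Bᶜ ⊆ S) with hU
  have hDlow : IsLowerSet (D : Set (Finset (Fin n))) := by
    intro s t hts hs
    simp only [hD, coe_filter, Set.mem_setOf_eq, mem_univ, true_and] at hs ⊢
    obtain ⟨B, hB, hsB⟩ := hs
    exact ⟨B, hB, hts.trans hsB⟩
  have hUup : IsUpperSet (U : Set (Finset (Fin n))) := by
    intro s t hts hs
    simp only [hU, coe_filter, Set.mem_setOf_eq, mem_univ, true_and] at hs ⊢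
    obtain ⟨B, hB, hsB⟩ := hs
    exact ⟨B, hB, hsB.trans hts⟩
  -- Harris-Kleitman
  have hHK : 2 ^ n * #(D ∩ U) ≤ #D * #U := by
    have := hDlow.card_inter_le_finset hUup
    simpa using this
  -- 𝒜 is disjoint from D ∪ U
  have hdisj : Disjoint 𝒜 (D ∪ U) := by
    rw [Finset.disjoint_left]
    intro A hA hA'
    rcases Finset.mem_union.1 hA' with h | h
    · simp only [hD, mem_filter] at h
      obtain ⟨-, B, hB, hAB⟩ := h
      exact (hIU A hA B hB).1 (by
        rw [← Finset.subset_empty]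
        intro x hx
        have h1 := Finset.mem_inter.1 hx
        exact absurd (hAB h1.1) (by simp [h1.2]))
    · simp only [hU, mem_filter] at h
      obtain ⟨-, B, hB, hAB⟩ := h
      refine (hIU A hA B hB).2 ?_
      apply Finset.eq_univ_iff_forall.2
      intro x
      by_cases hxB : x ∈ B
      · exact Finset.mem_union.2 (Or.inr hxB)
      · exact Finset.mem_union.2 (Or.inl (hAB (by simp [hxB])))
  have hcardA : #𝒜 + #(D ∪ U) ≤ 2 ^ n := by
    have h1 : #(𝒜 ∪ (D ∪ U)) ≤ Fintype.card (Finset (Fin n)) := Finset.card_le_univ _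
    rw [Finset.card_union_of_disjoint hdisj] at h1
    simpa [Fintype.card_finset, Fintype.card_fin] using h1
  -- ℬ embeds into D ∩ U via complements
  have hBk : #ℬ ≤ #(D ∩ U) := by
    apply Finset.card_le_card_of_injOn (fun B => Bᶜ)
    · intro B hB
      show Bᶜ ∈ D ∩ U
      simp only [hD, hU, Finset.mem_inter, mem_filter, mem_univ, true_and]
      exact ⟨⟨B, hB, subset_rfl⟩, ⟨B, hB, subset_rfl⟩⟩
    · intro a _ b _ h
      exact compl_injective h
  have hiu : #(D ∩ U) + #(D ∪ U) = #D + #U := Finset.card_inter_add_card_union D U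
  have hDN : #D ≤ 2 ^ n := by
    have := Finset.card_le_univ D
    simpa [Fintype.card_finset, Fintype.card_fin] using this
  have hUN : #U ≤ 2 ^ n := by
    have := Finset.card_le_univ U
    simpa [Fintype.card_finset, Fintype.card_fin] using this
  have h2nat : #𝒜 + #D + #U ≤ 2 ^ n + #(D ∩ U) := by omega
  exact stmt_12_arith (#𝒜 : ℤ) (#ℬ : ℤ) (#D : ℤ) (#U : ℤ) (#(D ∩ U) : ℤ) ((2 : ℤ) ^ n)
    (Int.natCast_nonneg _) (Int.natCast_nonneg _) (Int.natCast_nonneg _) (Int.natCast_nonneg _)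
    (by exact_mod_cast Nat.one_le_two_pow)
    (by exact_mod_cast h2nat) (by exact_mod_cast hcon) (by exact_mod_cast hcard)
    (by exact_mod_cast hBk) (by exact_mod_cast hHK) (by exact_mod_cast hDN)
    (by exact_mod_cast hUN)
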